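/- Let Ω be a measure space and H = L²(Ω). Let V ⊆ H be a Hilbert space with continuous embedding, A : V → V* linear, bounded, coercive and T-monotone (⟨Au⁺, u⁻⟩ ≤ 0 for all u ∈ V, where u⁺ is the pointwise positive part and u⁻ = u⁺ − u, and V is closed under positive parts). Let ρ > 0, let Φ : H → V be increasing, and let σ_ρ act pointwise. If f ≥ g in V*, φ ≥ ψ a.e., u solves Au + (1/ρ)σ_ρ(u − Φ(φ)) = f and v solves Av + (1/ρ)σ_ρ(v − Φ(ψ)) = g, then v ≤ u a.e. -/

import Mathlib

open MeasureTheory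

noncomputable def sig (ρ r : ℝ) : ℝ :=
  if r ≤ 0 then 0 else if r < ρ then r ^ 2 / (2 * ρ) else r - ρ / 2

lemma sig_nonneg {ρ : ℝ} (hρ : 0 < ρ) (r : ℝ) : 0 ≤ sig ρ r := by
  unfold sig
  rcases le_or_gt r 0 with hr | hr
  · rw [if_pos hr]
  · rw [if_neg (not_le.mpr hr)]
    rcases lt_or_ge r ρ with h2 | h2
    · rw [if_pos h2]; positivity
    · rw [if_neg (not_lt.mpr h2)]; linarith

lemma sig_mono {ρ : ℝ} (hρ : 0 < ρ) : Monotone (sig ρ) := by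
  intro r s hrs
  rcases le_or_gt r 0 with hr | hr
  · calc sig ρ r = 0 := by unfold sig; rw [if_pos hr]
    _ ≤ sig ρ s := sig_nonneg hρ s
  · unfold sig
    rw [if_neg (not_le.mpr hr), if_neg (not_le.mpr (hr.trans_le hrs))]
    rcases lt_or_ge r ρ with h1 | h1
    · rw [if_pos h1]
      rcases lt_or_ge s ρ with h2 | h2
      · rw [if_pos h2]
        have h2ρ : (0:ℝ) < 2 * ρ := by linarith
        rw [div_le_div_iff₀ h2ρ h2ρ]
        nlinarith [mul_le_mul hrs hrs hr.le (hr.le.trans hrs)]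
      · rw [if_neg (not_lt.mpr h2), div_le_iff₀ (by linarith : (0:ℝ) < 2 * ρ)]
        nlinarith [mul_pos hr (sub_pos.mpr h1), mul_nonneg hρ.le (sub_nonneg.mpr h2)]
    · rw [if_neg (not_lt.mpr h1), if_neg (not_lt.mpr (h1.trans hrs))]
      linarith

lemma abs_sig_le {ρ : ℝ} (hρ : 0 < ρ) (r : ℝ) : |sig ρ r| ≤ |r| := by
  rw [abs_of_nonneg (sig_nonneg hρ r)]
  unfold sig
  rcases le_or_gt r 0 with hr | hr
  · rw [if_pos hr]; positivity
  · rw [if_neg (not_le.mpr hr), abs_of_pos hr]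
    rcases lt_or_ge r ρ with h2 | h2
    · rw [if_pos h2, div_le_iff₀ (by linarith : (0:ℝ) < 2 * ρ)]
      nlinarith [mul_pos hr (sub_pos.mpr h2), mul_pos hρ hr]
    · rw [if_neg (not_lt.mpr h2)]; linarith

lemma sig_measurable (ρ : ℝ) : Measurable (sig ρ) := by
  unfold sig
  apply Measurable.ite (measurableSet_le measurable_id measurable_const) measurable_const
  apply Measurable.ite (measurableSet_lt measurable_id measurable_const)
  · exact (measurable_id.pow_const 2).div_const _
  · exact measurable_id.sub_const _

theorem stmt_9
    {Ω : Type*} [MeasureSpace Ω]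
    {V : Type*} [NormedAddCommGroup V] [InnerProductSpace ℝ V]
    (ι : V →L[ℝ] Lp ℝ 2 (volume : Measure Ω))
    (pos : V → V) (hpos : ∀ u : V, ι (pos u) = (ι u) ⊔ 0)
    (A : V →L[ℝ] V →L[ℝ] ℝ)
    (Ca : ℝ) (hCa : 0 < Ca)
    (hcoer : ∀ u : V, Ca * ‖u‖ ^ 2 ≤ A u u)
    (hTmono : ∀ u : V, A (pos u) (pos u - u) ≤ 0)
    (ρ : ℝ) (hρ : 0 < ρ)
    (Φ : Lp ℝ 2 (volume : Measure Ω) → V)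
    (hΦ : ∀ φ ψ : Lp ℝ 2 (volume : Measure Ω), ψ ≤ φ → ι (Φ ψ) ≤ ι (Φ φ))
    (f g : V →L[ℝ] ℝ)
    (hfg : ∀ w : V, 0 ≤ ι w → g w ≤ f w)
    (φ ψ : Lp ℝ 2 (volume : Measure Ω)) (hφψ : ψ ≤ φ)
    (u v : V)
    (hu : ∀ w : V, A u w + (1 / ρ) * ∫ x, sig ρ ((ι u - ι (Φ φ)) x) * (ι w) x = f w)
    (hv : ∀ w : V, A v w + (1 / ρ) * ∫ x, sig ρ ((ι v - ι (Φ ψ)) x) * (ι w) x = g w) :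
    ι v ≤ ι u := by
  classical
  set m : V := pos (u - v) with hm
  set w : V := m + (v - u) with hwdef
  have hιw : ι w = (ι v - ι u) ⊔ 0 := by
    rw [hwdef, map_add, hpos, map_sub, map_sub]
    rw [sup_add, zero_add]
    rw [show ι u - ι v + (ι v - ι u) = 0 by abel, sup_comm]
  have hιw_nonneg : 0 ≤ ι w := by rw [hιw]; exact le_sup_right
  -- T-monotonicity gives A m w ≤ 0
  have hAm : A m w ≤ 0 := by
    have := hTmono (u - v)
    have hrw : pos (u - v) - (u - v) = w := by rw [hwdef, hm]; abel
    rwa [hrw] at this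
  -- integrability of the penalisation integrands
  have hint : ∀ h : Lp ℝ 2 (volume : Measure Ω),
      Integrable (fun x => sig ρ (h x) * (ι w) x) := by
    intro h
    have hbig : Integrable (fun x => (h : Ω → ℝ) x * (ι w) x) := by
      have := L2.integrable_inner (𝕜 := ℝ) h (ι w)
      simpa [RCLike.inner_apply, mul_comm] using this
    refine hbig.mono ?_ ?_
    · exact (((sig_measurable ρ).comp_aemeasurable
        (Lp.aestronglyMeasurable h).aemeasurable).aestronglyMeasurable.mul
        (Lp.aestronglyMeasurable (ι w)))
    · filter_upwards with x
      rw [Real.norm_eq_abs, Real.norm_eq_abs, abs_mul, abs_mul]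
      exact mul_le_mul_of_nonneg_right (abs_sig_le hρ _) (abs_nonneg _)
  -- a.e. comparison of the penalisation integrands
  have hmono_ae : (fun x => sig ρ ((ι u - ι (Φ φ)) x) * (ι w) x)
      ≤ᵐ[(volume : Measure Ω)] (fun x => sig ρ ((ι v - ι (Φ ψ)) x) * (ι w) x) := by
    have hΦle : ι (Φ ψ) ≤ᵐ[(volume : Measure Ω)] ι (Φ φ) :=
      (Lp.coeFn_le _ _).mpr (hΦ φ ψ hφψ)
    have hwc : (ι w : Ω → ℝ) =ᵐ[(volume : Measure Ω)]
        fun x => (ι v - ι u : Lp ℝ 2 (volume : Measure Ω)) x ⊔ 0 := by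
      rw [hιw]
      filter_upwards [Lp.coeFn_sup (ι v - ι u) (0 : Lp ℝ 2 (volume : Measure Ω)),
        Lp.coeFn_zero ℝ 2 (volume : Measure Ω)] with x hx hx0
      rw [hx, Pi.sup_apply, hx0, Pi.zero_apply]
    filter_upwards [hΦle, hwc, Lp.coeFn_sub (ι u) (ι (Φ φ)),
      Lp.coeFn_sub (ι v) (ι (Φ ψ)), Lp.coeFn_sub (ι v) (ι u)] with x hΦx hwx h1x h2x hvux
    rcases le_or_gt ((ι v) x) ((ι u) x) with hle | hlt
    · have : (ι w) x = 0 := by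
        rw [hwx, hvux, Pi.sub_apply]
        exact sup_eq_right.mpr (by linarith)
      simp [this]
    · have hwx0 : 0 ≤ (ι w) x := by rw [hwx]; exact le_sup_right
      refine mul_le_mul_of_nonneg_right (sig_mono hρ ?_) hwx0
      rw [h1x, h2x, Pi.sub_apply, Pi.sub_apply]
      linarith
  have hIle : (∫ x, sig ρ ((ι u - ι (Φ φ)) x) * (ι w) x)
      ≤ ∫ x, sig ρ ((ι v - ι (Φ ψ)) x) * (ι w) x :=
    integral_mono_ae (hint _) (hint _) hmono_ae
  -- subtracting the equations
  have hAz : A (v - u) w ≤ 0 := by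
    have e1 := hu w
    have e2 := hv w
    have hgf : g w ≤ f w := hfg w hιw_nonneg
    have hAs : A (v - u) = A v - A u := map_sub A v u
    rw [hAs, ContinuousLinearMap.sub_apply]
    have h1ρ : (0:ℝ) ≤ 1 / ρ := by positivity
    have hmul := mul_le_mul_of_nonneg_left hIle h1ρ
    linarith
  -- coercivity
  have hAww : A w w ≤ 0 := by
    have hAw : A w = A m + A (v - u) := by rw [hwdef, map_add]
    calc A w w = A m w + A (v - u) w := by rw [hAw, ContinuousLinearMap.add_apply]
    _ ≤ 0 := by linarith
  have hw0 : w = 0 := by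
    have h1 := hcoer w
    have h2 : Ca * ‖w‖ ^ 2 ≤ 0 := h1.trans hAww
    have h3 : ‖w‖ ^ 2 ≤ 0 := by nlinarith [sq_nonneg ‖w‖]
    have h4 : ‖w‖ ^ 2 = 0 := le_antisymm h3 (sq_nonneg _)
    have h5 : ‖w‖ = 0 := by
      have := sq_eq_zero_iff.mp h4
      exact this
    exact norm_eq_zero.mp h5
  have hsup : (ι v - ι u) ⊔ 0 = 0 := by rw [← hιw, hw0, map_zero]
  have hle : ι v - ι u ≤ 0 := le_sup_left.trans_eq hsup
  exact sub_nonpos.mp hle
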